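/- Let X be a complex Banach space, A a positive operator on X, and α ∈ (0,1). Write A^{-β} = (sin(πβ)/π) ∫₀^∞ u^{-β}(u+A)^{-1} du for β ∈ (0,1). Then the following identities hold, all integrals being convergent Bochner integrals: (i) (sin(πα)/π) ∫₀^∞ s^{1-α}(s²+A)^{-1} ds = cos(πα/2)·A^{-α/2}; (ii) (sin(πα)/π) ∫₀^∞ s^{-α}(s²+A)^{-1} ds = sin(πα/2)·A^{-(α+1)/2}; (iii) for every x ∈ D(A), (sin(πα)/π) ∫₀^∞ s^{-α} A(s²+A)^{-1} x ds = sin(πα/2)·A^{-(α+1)/2}(Ax), where A(s²+A)^{-1} = I − s²(s²+A)^{-1}. -/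

import Mathlib

open MeasureTheory Real Set

noncomputable section

/-- `R` is a two-sided bounded inverse of `lam + A : D(A) → X`;
in particular `lam + A` is bijective from `D(A)` onto `X` with bounded inverse `R`. -/
def ResolventAt {X : Type*} [NormedAddCommGroup X] [NormedSpace ℂ X]
    (A : X →ₗ.[ℂ] X) (lam : ℂ) (R : X →L[ℂ] X) : Prop :=
  (∀ x : A.domain, R (lam • (x : X) + A x) = x) ∧
  (∀ y : X, ∃ h : R y ∈ A.domain, lam • R y + A ⟨R y, h⟩ = y)

/-- `A` is a positive operator with constant `M ≥ 1` and resolvent family `R`. -/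
structure IsPositive {X : Type*} [NormedAddCommGroup X] [NormedSpace ℂ X]
    (A : X →ₗ.[ℂ] X) (M : ℝ) (R : ℝ → X →L[ℂ] X) : Prop where
  dense_domain : Dense (A.domain : Set X)
  closed_graph : IsClosed (A.graph : Set (X × X))
  one_le : 1 ≤ M
  resolvent : ∀ s : ℝ, 0 ≤ s → ResolventAt A (s : ℂ) (R s)
  bound : ∀ s : ℝ, 0 ≤ s → (1 + s) * ‖R s‖ ≤ M

/-- The Balakrishnan fractional power `A ^ (-α)`, expressed through the
resolvent family `R` of `A`:  `A⁻ᵅ = (sin (π α) / π) ∫₀^∞ s⁻ᵅ (s+A)⁻¹ ds`. -/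
def negPow {X : Type*} [NormedAddCommGroup X] [NormedSpace ℂ X]
    (R : ℝ → X →L[ℂ] X) (α : ℝ) : X →L[ℂ] X :=
  (Real.sin (π * α) / π) • ∫ s in Ioi (0 : ℝ), s ^ (-α) • R s

set_option maxHeartbeats 1000000 in
set_option synthInstance.maxHeartbeats 400000 in
/-- the change-of-variable identities used to compute the fractional
powers of `Λ₄`, where `(s²+A)⁻¹ = R (s²)` and `A(s²+A)⁻¹ = I - s²(s²+A)⁻¹`. -/
theorem stmt17 {X : Type*} [NormedAddCommGroup X] [NormedSpace ℂ X] [CompleteSpace X]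
    (M : ℝ) (A : X →ₗ.[ℂ] X) (R : ℝ → X →L[ℂ] X) (hA : IsPositive A M R)
    (α : ℝ) (hα : α ∈ Ioo (0 : ℝ) 1) :
    -- (i)  ∫ s¹⁻ᵅ (s²+A)⁻¹ ds = cos (πα/2) A^{-α/2}
    (IntegrableOn (fun s : ℝ => s ^ (1 - α) • R (s ^ 2)) (Ioi 0) ∧
      (Real.sin (π * α) / π) • ∫ s in Ioi (0 : ℝ), s ^ (1 - α) • R (s ^ 2)
        = Real.cos (π * α / 2) • negPow R (α / 2)) ∧
    -- (ii)  ∫ s⁻ᵅ (s²+A)⁻¹ ds = sin (πα/2) A^{-(α+1)/2}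
    (IntegrableOn (fun s : ℝ => s ^ (-α) • R (s ^ 2)) (Ioi 0) ∧
      (Real.sin (π * α) / π) • ∫ s in Ioi (0 : ℝ), s ^ (-α) • R (s ^ 2)
        = Real.sin (π * α / 2) • negPow R ((α + 1) / 2)) ∧
    -- (iii)  ∀ x ∈ D(A), ∫ s⁻ᵅ A(s²+A)⁻¹ x ds = sin (πα/2) A^{-(α+1)/2} (A x)
    (∀ x : A.domain,
      IntegrableOn (fun s : ℝ =>
        s ^ (-α) • ((x : X) - s ^ 2 • (R (s ^ 2)) (x : X))) (Ioi 0) ∧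
      (Real.sin (π * α) / π) • ∫ s in Ioi (0 : ℝ),
          s ^ (-α) • ((x : X) - s ^ 2 • (R (s ^ 2)) (x : X))
        = Real.sin (π * α / 2) • negPow R ((α + 1) / 2) (A x)) := by
  obtain ⟨hα0, hα1⟩ := hα
  have hπ : (0:ℝ) < π := Real.pi_pos
  -- basic norm bounds on the resolvent
  have hRM : ∀ s : ℝ, 0 ≤ s → ‖R s‖ ≤ M := by
    intro s hs
    have h := hA.bound s hs
    nlinarith [norm_nonneg (R s)]
  have hRb : ∀ s : ℝ, 0 ≤ s → ‖R s‖ ≤ M / (1 + s) := by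
    intro s hs
    rw [le_div_iff₀ (by linarith)]
    nlinarith [hA.bound s hs]
  -- resolvent identity applied to domain elements
  have hres : ∀ t : ℝ, 0 ≤ t → ∀ x : A.domain,
      (R t) (A x) = (x : X) - t • (R t) (x : X) := by
    intro t ht x
    have h := (hA.resolvent t ht).1 x
    rw [map_add, ContinuousLinearMap.map_smul] at h
    have hc : (t : ℂ) • (R t) (x : X) = t • (R t) (x : X) := by
      rw [Complex.coe_smul]
    rw [hc] at h
    linear_combination (norm := module) h
  -- Lipschitz continuity of R on [0,∞)
  have hLip : ∀ s t : ℝ, 0 ≤ s → 0 ≤ t → ‖R s - R t‖ ≤ M * M * |s - t| := by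
    intro s t hs ht
    have hM0 : (0:ℝ) ≤ M := le_trans zero_le_one hA.one_le
    have hnn : (0:ℝ) ≤ M * M * |s - t| := mul_nonneg (mul_nonneg hM0 hM0) (abs_nonneg _)
    refine ContinuousLinearMap.opNorm_le_bound _ hnn (fun y => ?_)
    obtain ⟨hmem, heq⟩ := (hA.resolvent t ht).2 y
    have h1 := (hA.resolvent s hs).1 ⟨R t y, hmem⟩
    have hA' : A ⟨R t y, hmem⟩ = y - (t:ℂ) • R t y := by
      linear_combination (norm := module) heq
    rw [hA'] at h1
    have h2 : (s:ℂ) • (R t y : X) + (y - (t:ℂ) • R t y) = y + ((s:ℂ)-(t:ℂ)) • R t y := by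
      module
    rw [h2, map_add, ContinuousLinearMap.map_smul] at h1
    have h3 : (R s - R t) y = -(((s:ℂ)-(t:ℂ)) • R s (R t y)) := by
      rw [ContinuousLinearMap.sub_apply]
      linear_combination (norm := module) h1
    rw [h3, norm_neg, norm_smul]
    have hcn : ‖(s:ℂ) - (t:ℂ)‖ = |s - t| := by
      rw [← Complex.ofReal_sub, Complex.norm_real, Real.norm_eq_abs]
    rw [hcn]
    have b1 : ‖R s (R t y)‖ ≤ M * (M * ‖y‖) := by
      refine le_trans ((R s).le_opNorm _) ?_
      have h4 : ‖R t y‖ ≤ M * ‖y‖ :=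
        le_trans ((R t).le_opNorm y)
          (mul_le_mul_of_nonneg_right (hRM t ht) (norm_nonneg y))
      have h5 : ‖R s‖ ≤ M := hRM s hs
      nlinarith [norm_nonneg (R t y), norm_nonneg (R s), hA.one_le]
    calc |s - t| * ‖R s (R t y)‖ ≤ |s - t| * (M * (M * ‖y‖)) :=
          mul_le_mul_of_nonneg_left b1 (abs_nonneg _)
      _ = M * M * |s - t| * ‖y‖ := by ring
  have hcont : ContinuousOn R (Ici 0) := by
    have hM0 : (0:ℝ) ≤ M := le_trans zero_le_one hA.one_le
    have hK : (0:ℝ) ≤ M * M := mul_nonneg hM0 hM0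
    refine LipschitzOnWith.continuousOn (K := (M*M).toNNReal) ?_
    refine LipschitzOnWith.of_dist_le_mul (fun s hs t ht => ?_)
    rw [dist_eq_norm, Real.dist_eq, Real.coe_toNNReal _ hK]
    exact hLip s t hs ht
  -- continuity of the integrands
  have hcontf : ∀ β : ℝ, ContinuousOn (fun u : ℝ => u ^ (-β) • R u) (Ioi 0) := by
    intro β
    refine ContinuousOn.smul (f := fun u : ℝ => u ^ (-β)) (fun u hu => ?_) (hcont.mono Ioi_subset_Ici_self)
    exact (Real.continuousAt_rpow_const u (-β) (Or.inl (ne_of_gt hu))).continuousWithinAt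
  -- integrability of u ↦ u^(-β) (u+A)⁻¹ on (0,∞) for β ∈ (0,1)
  have hInt : ∀ β : ℝ, 0 < β → β < 1 →
      IntegrableOn (fun u : ℝ => u ^ (-β) • R u) (Ioi 0) := by
    intro β hβ0 hβ1
    rw [← Ioc_union_Ioi_eq_Ioi (zero_le_one (α := ℝ))]
    refine IntegrableOn.union ?_ ?_
    · -- on (0,1]
      have hg : IntegrableOn (fun u : ℝ => M * u ^ (-β)) (Ioc (0:ℝ) 1) := by
        refine Integrable.const_mul ?_ M
        exact (intervalIntegrable_iff_integrableOn_Ioc_of_le zero_le_one).mp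
          (intervalIntegral.intervalIntegrable_rpow' (by linarith))
      refine Integrable.mono' hg
        (((hcontf β).mono (fun u hu => hu.1)).aestronglyMeasurable measurableSet_Ioc) ?_
      filter_upwards [ae_restrict_mem measurableSet_Ioc] with u hu
      have hns : ‖u ^ (-β) • R u‖ = ‖u ^ (-β)‖ * ‖R u‖ := norm_smul (u ^ (-β)) (R u)
      rw [hns, Real.norm_eq_abs, abs_of_nonneg (Real.rpow_nonneg hu.1.le _)]
      have := hRM u hu.1.le
      have h0 : (0:ℝ) ≤ u ^ (-β) := Real.rpow_nonneg hu.1.le _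
      nlinarith [norm_nonneg (R u)]
    · -- on (1,∞)
      have hg : IntegrableOn (fun u : ℝ => M * u ^ (-β - 1)) (Ioi (1:ℝ)) :=
        (integrableOn_Ioi_rpow_of_lt (by linarith) one_pos).const_mul M
      refine Integrable.mono' hg
        (((hcontf β).mono (t := Ioi (1:ℝ)) (fun u hu => (lt_trans one_pos hu : (0:ℝ) < u))).aestronglyMeasurable
          measurableSet_Ioi) ?_
      filter_upwards [ae_restrict_mem measurableSet_Ioi] with u hu
      have hu0 : (0:ℝ) < u := lt_trans one_pos hu
      have hns : ‖u ^ (-β) • R u‖ = ‖u ^ (-β)‖ * ‖R u‖ := norm_smul (u ^ (-β)) (R u)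
      rw [hns, Real.norm_eq_abs, abs_of_nonneg (Real.rpow_nonneg hu0.le _)]
      have h1 : ‖R u‖ ≤ M / (1 + u) := hRb u hu0.le
      have h2 : M / (1 + u) ≤ M / u :=
        div_le_div_of_nonneg_left (by linarith [hA.one_le]) hu0 (by linarith)
      have h3 : u ^ (-β - 1) = u ^ (-β) * u⁻¹ := by
        rw [Real.rpow_sub hu0, Real.rpow_one, div_eq_mul_inv]
      rw [h3]
      have h0 : (0:ℝ) ≤ u ^ (-β) := Real.rpow_nonneg hu0.le _
      calc u ^ (-β) * ‖R u‖ ≤ u ^ (-β) * (M / u) := by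
            exact mul_le_mul_of_nonneg_left (le_trans h1 h2) h0
        _ = M * (u ^ (-β) * u⁻¹) := by ring
  -- change of variables u = s²
  have key : ∀ β : ℝ, 0 < β → β < 1 →
      IntegrableOn (fun s : ℝ => s ^ (1 - 2*β) • R (s ^ 2)) (Ioi 0) ∧
      (∫ s in Ioi (0:ℝ), s ^ (1 - 2*β) • R (s ^ 2))
        = (2:ℝ)⁻¹ • ∫ u in Ioi (0:ℝ), u ^ (-β) • R u := by
    intro β hβ0 hβ1
    set f : ℝ → (X →L[ℂ] X) := fun u => u ^ (-β) • R u with hf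
    have hfi : IntegrableOn f (Ioi 0) := hInt β hβ0 hβ1
    have heq : EqOn (fun s : ℝ => s ^ ((2:ℝ) - 1) • f (s ^ (2:ℝ)))
        (fun s : ℝ => s ^ (1 - 2*β) • R (s ^ 2)) (Ioi 0) := by
      intro s hs
      have hs0 : (0:ℝ) < s := hs
      have h2 : s ^ (2:ℝ) = s ^ (2:ℕ) := by
        rw [← Real.rpow_natCast s 2]; norm_num
      have h3 : (s ^ (2:ℝ)) ^ (-β) = s ^ (-(2*β)) := by
        rw [← Real.rpow_mul hs0.le]; ring_nf
      simp only [hf]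
      rw [← h2, h3, smul_smul]
      congr 1
      rw [← Real.rpow_add hs0]
      ring_nf
    constructor
    · have h := (integrableOn_Ioi_comp_rpow_iff' f (p := 2) two_ne_zero).mpr hfi
      exact (integrableOn_congr_fun heq measurableSet_Ioi).mp h
    · have hcv := integral_comp_rpow_Ioi f (p := 2) two_ne_zero
      have h2 : EqOn (fun s : ℝ => (|(2:ℝ)| * s ^ ((2:ℝ) - 1)) • f (s ^ (2:ℝ)))
          (fun s : ℝ => (2:ℝ) • (s ^ (1 - 2*β) • R (s ^ 2))) (Ioi 0) := by
        intro s hs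
        have := heq hs
        simp only at this ⊢
        rw [abs_of_pos (by norm_num : (0:ℝ) < 2), mul_smul, this]
      rw [setIntegral_congr_fun measurableSet_Ioi h2, integral_smul] at hcv
      rw [← hcv, smul_smul]
      norm_num
  obtain ⟨hi1, hi2⟩ := key (α/2) (by linarith) (by linarith)
  obtain ⟨hj1, hj2⟩ := key ((α+1)/2) (by linarith) (by linarith)
  have e1 : (1 : ℝ) - 2*(α/2) = 1 - α := by ring
  have e2 : (1 : ℝ) - 2*((α+1)/2) = -α := by ring
  rw [e1] at hi1 hi2
  rw [e2] at hj1 hj2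
  -- part (ii) operator identity (also used for (iii))
  have hii : (Real.sin (π * α) / π) • ∫ s in Ioi (0:ℝ), s ^ (-α) • R (s ^ 2)
      = Real.sin (π * α / 2) • negPow R ((α + 1) / 2) := by
    rw [hj2, negPow, smul_smul, smul_smul]
    congr 1
    have h1 : π * ((α+1)/2) = π * α / 2 + π / 2 := by ring
    rw [h1, Real.sin_add_pi_div_two]
    have h2 : π * α = 2 * (π * α / 2) := by ring
    rw [h2, Real.sin_two_mul]
    field_simp
  refine ⟨⟨hi1, ?_⟩, ⟨hj1, hii⟩, ?_⟩
  · rw [hi2, negPow, smul_smul, smul_smul]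
    congr 1
    have h1 : π * (α/2) = π * α / 2 := by ring
    have h2 : π * α = 2 * (π * α / 2) := by ring
    rw [h1, h2, Real.sin_two_mul]
    field_simp
  · intro x
    have heq3 : EqOn (fun s : ℝ => s ^ (-α) • ((x : X) - s ^ 2 • (R (s ^ 2)) (x : X)))
        (fun s : ℝ => (s ^ (-α) • R (s ^ 2)) (A x)) (Ioi 0) := by
      intro s hs
      simp only [ContinuousLinearMap.smul_apply]
      rw [hres (s ^ 2) (by positivity) x]
    have happ : IntegrableOn (fun s : ℝ => (s ^ (-α) • R (s ^ 2)) (A x)) (Ioi 0) :=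
      (ContinuousLinearMap.apply ℂ X (A x)).integrable_comp hj1
    refine ⟨(integrableOn_congr_fun heq3 measurableSet_Ioi).mpr happ, ?_⟩
    rw [setIntegral_congr_fun measurableSet_Ioi heq3,
      ← ContinuousLinearMap.integral_apply hj1 (A x), ← ContinuousLinearMap.smul_apply,
      hii, ContinuousLinearMap.smul_apply]
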